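/- Let $V_1$ be a continuous function on $\mathbb{R}^N$ with $V_1(x) > 1$ for all $x$ with $t \le |x| \le R$, for every $R > t$ (i.e., $V_1 > 1$ outside the ball $B_t(0)$). Then the problem $-\Delta u = V_1(x) u$, $u > 0$ in $\mathbb{R}^N$, has no classical solution. -/

import Mathlib

open MeasureTheory Real Asymptotics
open scoped InnerProductSpace

open Filter Topology

section aux
variable {E : Type*} [NormedAddCommGroup E] [NormedSpace ℝ E]

lemma line_hasDerivAt {f : E → ℝ} (hf : ContDiff ℝ 2 f) (x v : E) (s : ℝ) :
    HasDerivAt (fun r : ℝ => f (x + r • v)) (fderiv ℝ f (x + s • v) v) s := by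
  have hγ : HasDerivAt (fun r : ℝ => x + r • v) v s := by
    simpa using ((hasDerivAt_id s).smul_const v).const_add x
  have hd : DifferentiableAt ℝ f (x + s • v) :=
    (hf.differentiable (by norm_num)).differentiableAt
  exact hd.hasFDerivAt.comp_hasDerivAt s hγ

lemma line_hasDerivAt2 {f : E → ℝ} (hf : ContDiff ℝ 2 f) (x v : E) :
    HasDerivAt (fun s : ℝ => fderiv ℝ f (x + s • v) v)
      (iteratedFDeriv ℝ 2 f x ![v, v]) 0 := by
  have hγ : HasDerivAt (fun r : ℝ => x + r • v) v 0 := by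
    simpa using ((hasDerivAt_id (0:ℝ)).smul_const v).const_add x
  have hf' : ContDiff ℝ 1 (fderiv ℝ f) := hf.fderiv_right (by norm_num)
  have hd : DifferentiableAt ℝ (fderiv ℝ f) (x + (0:ℝ) • v) :=
    (hf'.differentiable (by norm_num)).differentiableAt
  have h1 : HasDerivAt (fun s : ℝ => fderiv ℝ f (x + s • v))
      (fderiv ℝ (fderiv ℝ f) (x + (0:ℝ) • v) v) 0 :=
    hd.hasFDerivAt.comp_hasDerivAt 0 hγ
  have h2 := h1.clm_apply (hasDerivAt_const 0 v)
  simp only [zero_smul, add_zero, map_zero] at h1 h2 ⊢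
  rw [iteratedFDeriv_two_apply]
  simpa using h2

lemma second_deriv_test {f f' : ℝ → ℝ} {c : ℝ} (hd : ∀ s, HasDerivAt f (f' s) s)
    (h2 : HasDerivAt f' c 0) (hmin : IsLocalMin f 0) : 0 ≤ c := by
  by_contra hc
  push_neg at hc
  have hf'0 : f' 0 = 0 := by
    have := hmin.deriv_eq_zero
    rwa [(hd 0).deriv] at this
  have hslope : Tendsto (slope f' 0) (𝓝[≠] (0:ℝ)) (𝓝 c) :=
    hasDerivAt_iff_tendsto_slope.1 h2
  have hev : ∀ᶠ s in 𝓝[>] (0:ℝ), slope f' 0 s < 0 :=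
    nhdsWithin_mono 0 (fun x hx => ne_of_gt hx) (hslope.eventually (Iio_mem_nhds hc))
  have hev2 : ∀ᶠ s in 𝓝[>] (0:ℝ), f 0 ≤ f s :=
    nhdsWithin_le_nhds hmin
  obtain ⟨s₁, hs₁pos, hs₁⟩ : ∃ s₁ > 0, (slope f' 0 s₁ < 0 ∧ f 0 ≤ f s₁) ∧
      ∀ s, 0 < s → s < s₁ → slope f' 0 s < 0 := by
    rcases (nhdsGT_basis (0:ℝ)).eventually_iff.1 (hev.and hev2) with ⟨δ, hδ, h⟩
    refine ⟨δ/2, by linarith, h ⟨by linarith, by linarith⟩, fun s hs hs' => (h ⟨hs, by linarith⟩).1⟩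
  have hanti : StrictAntiOn f (Set.Icc 0 s₁) := by
    refine strictAntiOn_of_deriv_neg (convex_Icc 0 s₁)
      (fun x _ => (hd x).continuousAt.continuousWithinAt) (fun x hx => ?_)
    rw [interior_Icc] at hx
    rw [(hd x).deriv]
    have hsl := hs₁.2 x hx.1 hx.2
    rw [slope_def_field, hf'0] at hsl
    simp only [sub_zero] at hsl
    rcases div_neg_iff.1 hsl with h | h
    · exact absurd hx.1 (not_lt.2 (le_of_lt h.2))
    · exact h.1
  have : f s₁ < f 0 := hanti (Set.mem_Icc.2 ⟨le_rfl, le_of_lt hs₁pos⟩)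
    (Set.mem_Icc.2 ⟨le_of_lt hs₁pos, le_rfl⟩) hs₁pos
  linarith [hs₁.1.2]

end aux

noncomputable def laplacian {N : ℕ} (u : EuclideanSpace ℝ (Fin N) → ℝ)
    (x : EuclideanSpace ℝ (Fin N)) : ℝ :=
  ∑ i, iteratedFDeriv ℝ 2 u x ![EuclideanSpace.single i 1, EuclideanSpace.single i 1]

set_option maxHeartbeats 1000000 in
theorem stmt0 (N : ℕ) (hN : 1 ≤ N) (t : ℝ) (ht : 0 < t)
    (V₁ : EuclideanSpace ℝ (Fin N) → ℝ) (hV₁ : Continuous V₁)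
    (hV₁gt : ∀ x : EuclideanSpace ℝ (Fin N), t ≤ ‖x‖ → 1 < V₁ x) :
    ¬ ∃ u : EuclideanSpace ℝ (Fin N) → ℝ,
        ContDiff ℝ 2 u ∧ (∀ x, 0 < u x) ∧ (∀ x, -laplacian u x = V₁ x * u x) := by
  rintro ⟨u, hu, hupos, heq⟩
  have hπ := Real.pi_pos
  set i₀ : Fin N := ⟨0, hN⟩ with hi₀
  set ε : ℝ := 1 / (N + 1) with hεdef
  have hε : 0 < ε := by positivity
  set d : ℝ := π / (2 * ε) with hddef
  have hd : 0 < d := by positivity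
  have hεd : ε * d = π / 2 := by
    rw [hddef]; field_simp
  set c : EuclideanSpace ℝ (Fin N) := EuclideanSpace.single i₀ (t + d) with hcdef
  set w : EuclideanSpace ℝ (Fin N) → ℝ := fun x => ∏ i, Real.cos (ε * (x i - c i)) with hwdef
  have hproj : ∀ i : Fin N, Continuous (fun x : EuclideanSpace ℝ (Fin N) => x i) :=
    fun i => (EuclideanSpace.proj (𝕜 := ℝ) i).continuous
  have hprojCD : ∀ i : Fin N, ContDiff ℝ 2 (fun x : EuclideanSpace ℝ (Fin N) => x i) :=
    fun i => (EuclideanSpace.proj (𝕜 := ℝ) i).contDiff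
  have hw2 : ContDiff ℝ 2 w := by
    rw [hwdef]
    exact contDiff_prod fun i _ =>
      Real.contDiff_cos.comp (contDiff_const.mul ((hprojCD i).sub contDiff_const))
  -- Laplacian of w
  have hiterw : ∀ (x : EuclideanSpace ℝ (Fin N)) (j : Fin N),
      iteratedFDeriv ℝ 2 w x ![EuclideanSpace.single j 1, EuclideanSpace.single j 1]
        = -(ε^2) * w x := by
    intro x j
    set v : EuclideanSpace ℝ (Fin N) := EuclideanSpace.single j 1 with hv
    set a : ℝ := ε * (x j - c j) with ha
    set C : ℝ := ∏ i ∈ Finset.univ.erase j, Real.cos (ε * (x i - c i)) with hC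
    have hwx : w x = Real.cos a * C := by
      rw [hwdef]
      exact (Finset.mul_prod_erase Finset.univ _ (Finset.mem_univ j)).symm
    have hcoord : ∀ (s : ℝ) (i : Fin N), (x + s • v) i = x i + s * (if i = j then 1 else 0) := by
      intro s i
      simp [hv, EuclideanSpace.single_apply, PiLp.add_apply, PiLp.smul_apply, smul_eq_mul]
    have hfun : (fun s : ℝ => w (x + s • v)) = fun s => Real.cos (a + ε * s) * C := by
      funext s
      rw [hwdef]
      simp only []
      rw [← Finset.mul_prod_erase Finset.univ _ (Finset.mem_univ j)]
      have h1 : ε * ((x + s • v) j - c j) = a + ε * s := by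
        rw [hcoord s j, if_pos rfl, ha]; ring
      rw [h1]
      congr 1
      refine Finset.prod_congr rfl fun i hi => ?_
      rw [hcoord s i, if_neg (Finset.ne_of_mem_erase hi)]
      ring_nf
    have haff : ∀ s : ℝ, HasDerivAt (fun r : ℝ => a + ε * r) ε s := by
      intro s
      simpa using ((hasDerivAt_id s).const_mul ε).const_add a
    have hline1 : ∀ s : ℝ, fderiv ℝ w (x + s • v) v = -Real.sin (a + ε * s) * ε * C := by
      intro s
      have h1 := line_hasDerivAt hw2 x v s
      rw [hfun] at h1
      have h2 : HasDerivAt (fun r : ℝ => Real.cos (a + ε * r) * C)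
          (-Real.sin (a + ε * s) * ε * C) s :=
        by simpa [Function.comp_def] using ((Real.hasDerivAt_cos (a + ε * s)).comp s (haff s)).mul_const C
      exact h1.unique h2
    have h2' : HasDerivAt (fun s : ℝ => fderiv ℝ w (x + s • v) v)
        (-(Real.cos (a + ε * 0) * ε) * ε * C) 0 := by
      have heqf : (fun s : ℝ => fderiv ℝ w (x + s • v) v)
          = fun s => -Real.sin (a + ε * s) * ε * C := funext hline1
      rw [heqf]
      exact ((((Real.hasDerivAt_sin (a + ε * 0)).comp 0 (haff 0)).neg).mul_const ε).mul_const C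
    have hfin := (line_hasDerivAt2 hw2 x v).unique h2'
    rw [hfin, hwx]
    simp only [mul_zero, add_zero]
    ring
  have hlapw : ∀ x, laplacian w x = -((N:ℝ) * ε^2) * w x := by
    intro x
    unfold laplacian
    rw [Finset.sum_congr rfl fun j _ => hiterw x j]
    rw [Finset.sum_const, Finset.card_univ, Fintype.card_fin, nsmul_eq_mul]
    ring
  -- The box Q
  set Q : Set (EuclideanSpace ℝ (Fin N)) := {x | ∀ i, |x i - c i| ≤ d} with hQdef
  have hQclosed : IsClosed Q := by
    have hQeq : Q = ⋂ i, (fun x : EuclideanSpace ℝ (Fin N) => |x i - c i|) ⁻¹' Set.Iic d := by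
      ext x; simp [hQdef, Set.mem_iInter]
    rw [hQeq]
    exact isClosed_iInter fun i =>
      IsClosed.preimage (((hproj i).sub continuous_const).abs) isClosed_Iic
  have hQbdd : Bornology.IsBounded Q := by
    apply (Metric.isBounded_closedBall (x := c) (r := Real.sqrt ((N:ℝ) * d^2))).subset
    intro x hx
    rw [Metric.mem_closedBall, dist_eq_norm, EuclideanSpace.norm_eq]
    apply Real.sqrt_le_sqrt
    have hbound : ∀ i : Fin N, ‖(x - c) i‖^2 ≤ d^2 := by
      intro i
      have h := abs_le.1 (hx i)
      have h0 : (x - c) i = x i - c i := rfl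
      rw [h0, Real.norm_eq_abs, sq_abs]
      nlinarith
    calc ∑ i, ‖(x - c) i‖^2 ≤ ∑ _i : Fin N, d^2 := Finset.sum_le_sum fun i _ => hbound i
      _ = (N:ℝ) * d^2 := by
          rw [Finset.sum_const, Finset.card_univ, Fintype.card_fin, nsmul_eq_mul]
  have hQcomp : IsCompact Q := Metric.isCompact_of_isClosed_isBounded hQclosed hQbdd
  have hcQ : c ∈ Q := by
    intro i; simp [hQdef, le_of_lt hd]
  have hwc : w c = 1 := by
    rw [hwdef]; simp
  -- maximize ψ = w / u on Q
  set ψ : EuclideanSpace ℝ (Fin N) → ℝ := fun y => w y / u y with hψdef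
  have hψcont : Continuous ψ := hw2.continuous.div hu.continuous fun y => (hupos y).ne'
  obtain ⟨x₀, hx₀Q, hx₀max⟩ := hQcomp.exists_isMaxOn ⟨c, hcQ⟩ hψcont.continuousOn
  have hψx₀pos : 0 < ψ x₀ := by
    have h1 : ψ c ≤ ψ x₀ := hx₀max hcQ
    have h2 : 0 < ψ c := by
      show (0:ℝ) < w c / u c
      rw [hwc]; exact div_pos one_pos (hupos c)
    linarith
  have hwx₀pos : 0 < w x₀ := by
    have := hψx₀pos
    rw [hψdef] at this
    rcases div_pos_iff.1 this with h | h
    · exact h.1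
    · exact absurd (hupos x₀) (not_lt.2 (le_of_lt h.2))
  -- x₀ is interior to Q
  have hx₀U : ∀ i, |x₀ i - c i| < d := by
    intro i
    rcases lt_or_eq_of_le (hx₀Q i) with h | h
    · exact h
    · exfalso
      have hcos0 : Real.cos (ε * (x₀ i - c i)) = 0 := by
        have habs : |ε * (x₀ i - c i)| = π / 2 := by
          rw [abs_mul, abs_of_pos hε, h]
          exact hεd
        rcases (abs_eq (by positivity : (0:ℝ) ≤ π / 2)).1 habs with h' | h'
        · rw [h']; exact Real.cos_pi_div_two
        · rw [h', Real.cos_neg]; exact Real.cos_pi_div_two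
      have hw0 : w x₀ = 0 := by
        rw [hwdef]
        exact Finset.prod_eq_zero (Finset.mem_univ i) hcos0
      linarith
  have hUopen : IsOpen {y : EuclideanSpace ℝ (Fin N) | ∀ i, |y i - c i| < d} := by
    have hUeq : {y : EuclideanSpace ℝ (Fin N) | ∀ i, |y i - c i| < d}
        = ⋂ i, (fun y : EuclideanSpace ℝ (Fin N) => |y i - c i|) ⁻¹' Set.Iio d := by
      ext y; simp [Set.mem_iInter]
    rw [hUeq]
    exact isOpen_iInter_of_finite fun i =>
      IsOpen.preimage (((hproj i).sub continuous_const).abs) isOpen_Iio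
  have hUnhds : {y : EuclideanSpace ℝ (Fin N) | ∀ i, |y i - c i| < d} ∈ 𝓝 x₀ :=
    hUopen.mem_nhds hx₀U
  -- the comparison function g
  set g : EuclideanSpace ℝ (Fin N) → ℝ := fun y => w x₀ * u y - u x₀ * w y with hgdef
  have hg2 : ContDiff ℝ 2 g := by
    rw [hgdef]
    exact (contDiff_const.mul hu).sub (contDiff_const.mul hw2)
  have hgmin : IsLocalMin g x₀ := by
    show ∀ᶠ y in 𝓝 x₀, g x₀ ≤ g y
    filter_upwards [hUnhds] with y hy
    have hyQ : y ∈ Q := fun i => (hy i).le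
    have hψy : ψ y ≤ ψ x₀ := hx₀max hyQ
    rw [hψdef] at hψy
    have h' : w y * u x₀ ≤ w x₀ * u y := by
      rw [div_le_div_iff₀ (hupos y) (hupos x₀)] at hψy
      linarith
    rw [hgdef]
    simp only []
    nlinarith
  -- second derivative test in each direction
  have hiter_nonneg : ∀ j : Fin N,
      0 ≤ iteratedFDeriv ℝ 2 g x₀ ![EuclideanSpace.single j 1, EuclideanSpace.single j 1] := by
    intro j
    set v : EuclideanSpace ℝ (Fin N) := EuclideanSpace.single j 1 with hv
    have hlinecont : ContinuousAt (fun s : ℝ => x₀ + s • v) 0 :=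
      (continuous_const.add (continuous_id.smul continuous_const)).continuousAt
    have h0 : x₀ + (0:ℝ) • v = x₀ := by simp
    have hmin0 : IsLocalMin (fun r : ℝ => g (x₀ + r • v)) 0 := by
      have hg0 : IsLocalMin g (x₀ + (0:ℝ) • v) := by
        rw [zero_smul, add_zero]; exact hgmin
      have hcomp := IsLocalMin.comp_continuous (g := fun s : ℝ => x₀ + s • v)
        (b := (0:ℝ)) hg0 hlinecont
      simpa [Function.comp_def] using hcomp
    exact second_deriv_test (fun s => line_hasDerivAt hg2 x₀ v s)
      (line_hasDerivAt2 hg2 x₀ v) hmin0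
  -- splitting of iterated derivatives of g
  have hgeq : g = (w x₀) • u + (-(u x₀)) • w := by
    funext y
    rw [hgdef]
    simp [smul_eq_mul]
    ring
  have hsplit : ∀ j : Fin N,
      iteratedFDeriv ℝ 2 g x₀ ![EuclideanSpace.single j 1, EuclideanSpace.single j 1]
        = w x₀ * iteratedFDeriv ℝ 2 u x₀ ![EuclideanSpace.single j 1, EuclideanSpace.single j 1]
          - u x₀ * iteratedFDeriv ℝ 2 w x₀ ![EuclideanSpace.single j 1, EuclideanSpace.single j 1] := by
    intro j
    have h1 : ContDiff ℝ ((2:ℕ) : ℕ∞) ((w x₀) • u) := hu.const_smul (w x₀)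
    have h2 : ContDiff ℝ ((2:ℕ) : ℕ∞) ((-(u x₀)) • w) := hw2.const_smul (-(u x₀))
    have h3 : ContDiff ℝ ((2:ℕ) : ℕ∞) u := hu
    have h4 : ContDiff ℝ ((2:ℕ) : ℕ∞) w := hw2
    rw [hgeq, iteratedFDeriv_add_apply (i := 2) h1.contDiffAt h2.contDiffAt,
      iteratedFDeriv_const_smul_apply h3.contDiffAt, iteratedFDeriv_const_smul_apply h4.contDiffAt]
    simp [smul_eq_mul]
    ring
  have hsum : 0 ≤ laplacian g x₀ := by
    unfold laplacian
    exact Finset.sum_nonneg fun j _ => hiter_nonneg j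
  have hlapg : laplacian g x₀ = w x₀ * laplacian u x₀ - u x₀ * laplacian w x₀ := by
    unfold laplacian
    rw [Finset.sum_congr rfl fun j _ => hsplit j]
    rw [Finset.sum_sub_distrib, ← Finset.mul_sum, ← Finset.mul_sum]
  have hlapu : laplacian u x₀ = -(V₁ x₀ * u x₀) := by linarith [heq x₀]
  -- ‖x₀‖ ≥ t
  have hci₀ : c i₀ = t + d := by
    rw [hcdef]
    simp [EuclideanSpace.single_apply]
  have hx₀i₀ : t ≤ x₀ i₀ := by
    have h := abs_le.1 (hx₀Q i₀)
    rw [hci₀] at h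
    linarith [h.1]
  have ht₀ : t ≤ ‖x₀‖ := by
    have hsq : (x₀ i₀)^2 ≤ ∑ i, ‖x₀ i‖^2 := by
      have := Finset.single_le_sum (f := fun i => ‖x₀ i‖^2)
        (fun i _ => by positivity) (Finset.mem_univ i₀)
      simpa [Real.norm_eq_abs, sq_abs] using this
    calc t ≤ x₀ i₀ := hx₀i₀
      _ = Real.sqrt ((x₀ i₀)^2) := (Real.sqrt_sq (by linarith)).symm
      _ ≤ Real.sqrt (∑ i, ‖x₀ i‖^2) := Real.sqrt_le_sqrt hsq
      _ = ‖x₀‖ := (EuclideanSpace.norm_eq x₀).symm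
  have hV := hV₁gt x₀ ht₀
  have hNε : (N:ℝ) * ε^2 < 1 := by
    have hN1 : (1:ℝ) ≤ (N:ℝ) := by exact_mod_cast hN
    have hpos : (0:ℝ) < ((N:ℝ) + 1)^2 := by positivity
    rw [hεdef, div_pow, one_pow, mul_one_div, div_lt_one hpos]
    nlinarith
  rw [hlapg, hlapu, hlapw x₀] at hsum
  nlinarith [mul_pos hwx₀pos (hupos x₀),
    mul_pos (mul_pos hwx₀pos (hupos x₀)) (show (0:ℝ) < V₁ x₀ - (N:ℝ) * ε^2 by linarith)]
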